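/- Let γ : {0,...,M-1} → {0,1}^n be a k-preserving code. For every p ≤ k and every i with i + p ≤ M - 1, the extended codeword ⊛{γ(i), γ(i+1), ..., γ(i+p)} has at least p positions equal to M. -/

import Mathlib

/-- Resolution of a ternary word (`none` is the metastable value `M`). -/
def res {n : ℕ} (x : Fin n → Option Bool) : Set (Fin n → Bool) :=
  {y | ∀ j : Fin n, ∀ b : Bool, x j = some b → y j = b}

open Classical in
/-- Extended codeword: pointwise superposition of all codewords `γ a`, `a ∈ I`. -/
noncomputable def extCW {M n : ℕ} (γ : Fin M → Fin n → Bool) (I : Set (Fin M)) :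
    Fin n → Option Bool :=
  fun j =>
    if ∀ a ∈ I, γ a j = true then some true
    else if ∀ a ∈ I, γ a j = false then some false
    else none

/-- The interval `⟨i, i+p⟩ = {i, ..., i+p}` inside `{0, ..., M-1}`. -/
def intvl (M i p : ℕ) : Set (Fin M) := {a : Fin M | i ≤ a.val ∧ a.val ≤ i + p}

/-- A code is `k`-preserving if for every interval `⟨i,i+p⟩` with `p ≤ k`,
the codewords in the resolution of the extended codeword are exactly the
codewords of the interval. -/
def Preserving {M n : ℕ} (γ : Fin M → Fin n → Bool) (k : ℕ) : Prop :=
  ∀ i p : ℕ, p ≤ k → i + p < M →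
    Set.range γ ∩ res (extCW γ (intvl M i p)) = γ '' (intvl M i p)

lemma extCW_mono_some {M n : ℕ} (γ : Fin M → Fin n → Bool) {I I' : Set (Fin M)}
    (hne : I.Nonempty) (hsub : I ⊆ I') (j : Fin n) (b : Bool)
    (h : extCW γ I' j = some b) : extCW γ I j = some b := by
  classical
  unfold extCW at h ⊢
  by_cases h1 : ∀ a ∈ I', γ a j = true
  · simp only [if_pos h1] at h
    have h1' : ∀ a ∈ I, γ a j = true := fun a ha => h1 a (hsub ha)
    rw [if_pos h1', h]
  · by_cases h2 : ∀ a ∈ I', γ a j = false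
    · simp only [if_neg h1, if_pos h2] at h
      have h2' : ∀ a ∈ I, γ a j = false := fun a ha => h2 a (hsub ha)
      have h1' : ¬ ∀ a ∈ I, γ a j = true := by
        intro h1'
        obtain ⟨a, ha⟩ := hne
        have := h1' a ha; have := h2' a ha; simp_all
      rw [if_neg h1', if_pos h2', h]
    · simp only [if_neg h1, if_neg h2] at h
      exact absurd h (by simp)

theorem preserving_ext_codeword_many_M {M n k : ℕ} (γ : Fin M → Fin n → Bool)
    (hinj : Function.Injective γ) (hpres : Preserving γ k)
    (i p : ℕ) (hp : p ≤ k) (hip : i + p < M) :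
    p ≤ Set.ncard {j : Fin n | extCW γ (intvl M i p) j = none} := by
  classical
  -- S q = metastable positions of the interval ⟨i, i+q⟩
  set S : ℕ → Set (Fin n) := fun q => {j : Fin n | extCW γ (intvl M i q) j = none} with hS
  suffices h : ∀ q, q ≤ p → q ≤ (S q).ncard from h p le_rfl
  intro q hq
  induction q with
  | zero => exact Nat.zero_le _
  | succ q ih =>
    have hq' : q ≤ p := Nat.le_of_succ_le hq
    have hlt : i + (q + 1) < M := by omega
    have hlt' : i + q < M := by omega
    have hsub : intvl M i q ⊆ intvl M i (q + 1) := by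
      intro a ha; obtain ⟨h1, h2⟩ := ha; exact ⟨h1, by omega⟩
    have hne : (intvl M i q).Nonempty :=
      ⟨⟨i, by omega⟩, by constructor <;> simp⟩
    have hSsub : S q ⊆ S (q + 1) := by
      intro j hj
      simp only [hS, Set.mem_setOf_eq] at hj ⊢
      cases h' : extCW γ (intvl M i (q+1)) j with
      | none => rfl
      | some b =>
        have := extCW_mono_some γ hne hsub j b h'
        rw [hj] at this; exact absurd this (by simp)
    have hSne : S q ≠ S (q + 1) := by
      intro heq
      -- then the extended codewords coincide
      have hext : extCW γ (intvl M i q) = extCW γ (intvl M i (q+1)) := by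
        funext j
        cases h' : extCW γ (intvl M i (q+1)) j with
        | none =>
          have hj : j ∈ S (q+1) := h'
          rw [← heq] at hj
          exact hj
        | some b => exact extCW_mono_some γ hne hsub j b h'
      have himg : γ '' (intvl M i q) = γ '' (intvl M i (q+1)) := by
        rw [← hpres i q (le_trans hq' hp) hlt', ← hpres i (q+1) (le_trans hq hp) hlt, hext]
      have hmem : γ ⟨i + q + 1, by omega⟩ ∈ γ '' (intvl M i (q+1)) :=
        ⟨⟨i + q + 1, by omega⟩, ⟨by simp; omega, by simp⟩, rfl⟩
      rw [← himg] at hmem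
      obtain ⟨a, ha, hga⟩ := hmem
      obtain ⟨ha1, ha2⟩ := ha
      have hv : a.val = i + q + 1 := by rw [hinj hga]
      omega
    have hfin : (S (q+1)).Finite := Set.toFinite _
    have : (S q).ncard < (S (q+1)).ncard :=
      Set.ncard_lt_ncard (hSsub.ssubset_of_ne hSne) hfin
    omega
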